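/- For any τ_1,…,τ_k ∈ [0,1], any p_0, p_1,…,p_k ∈ (0,1), any θ ∈ (ℝ^d)^n, any cluster j, and any client i ∈ I_j, the stochastic gradient oracle is unbiased: p_0 · [ (γ_i α_j/p_0)(θ_i − θ̄) + (γ_i τ_j(1−α_j)/p_0)(θ_i − θ̄_j) ] + (1−p_0)p_j · [ (γ_i(1−τ_j)(1−α_j)/((1−p_0)p_j))(θ_i − θ̄_j) ] + (1−p_0)(1−p_j) · [ (1/((1−p_0)(1−p_j)))∇f_i(θ_i) ] = ∇f_i(θ_i) + α_j γ_i (θ_i − θ̄) + (1−α_j) γ_i (θ_i − θ̄_j), and this quantity equals the partial gradient ∇_{θ_i} F(θ) of the objective F(θ) = Σ_{i=1}^n f_i(θ_i) + Σ_{j=1}^k (1−α_j)ψ_j(θ) + φ(θ). -/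

import Mathlib

open scoped BigOperators

open scoped RealInnerProductSpace
noncomputable section
set_option linter.unusedSectionVars false
section AuxGrad
variable {F : Type*} [NormedAddCommGroup F] [InnerProductSpace ℝ F] [CompleteSpace F]

lemma hga_add {f g : F → ℝ} {f' g' : F} {x : F} (hf : HasGradientAt f f' x)
    (hg : HasGradientAt g g' x) : HasGradientAt (fun y => f y + g y) (f' + g') x := by
  rw [hasGradientAt_iff_hasFDerivAt] at *
  rw [map_add]
  exact hf.add hg

lemma hga_add_const {f : F → ℝ} {f' : F} {x : F} (hf : HasGradientAt f f' x) (C : ℝ) :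
    HasGradientAt (fun y => f y + C) f' x := by
  simpa using hga_add hf (hasGradientAt_const x C)

lemma hga_const_mul {f : F → ℝ} {f' : F} {x : F} (c : ℝ) (hf : HasGradientAt f f' x) :
    HasGradientAt (fun y => c * f y) (c • f') x := by
  rw [hasGradientAt_iff_hasFDerivAt] at *
  simpa using hf.const_mul c

lemma hga_quad (b : F) (r : ℝ) (x : F) :
    HasGradientAt (fun y => ‖b + r • y‖ ^ 2) ((2 * r) • (b + r • x)) x := by
  rw [hasGradientAt_iff_hasFDerivAt]
  have hm : HasFDerivAt (fun y : F => b + r • y) (r • ContinuousLinearMap.id ℝ F) x := by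
    simpa using ((hasFDerivAt_id x).const_smul r).const_add b
  have h2 := hm.inner ℝ hm
  have key : HasFDerivAt (fun y : F => (inner ℝ (b + r • y) (b + r • y) : ℝ))
      ((InnerProductSpace.toDual ℝ F) ((2 * r) • (b + r • x))) x := by
    refine h2.congr_fderiv ?_
    ext h
    simp only [InnerProductSpace.toDual_apply_apply, ContinuousLinearMap.coe_comp', Function.comp_apply,
      ContinuousLinearMap.prod_apply, ContinuousLinearMap.coe_smul', Pi.smul_apply,
      ContinuousLinearMap.coe_id', id_eq, fderivInnerCLM_apply, real_inner_smul_left,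
      real_inner_smul_right, smul_eq_mul]
    rw [real_inner_comm]
    ring
  simpa only [real_inner_self_eq_norm_sq] using key

lemma mean_identity {ι : Type*} (S : Finset ι) (w : ι → ℝ) (hs : (∑ l ∈ S, w l) ≠ 0)
    (u : ι → F) :
    ∑ l ∈ S, w l * ‖u l - (∑ l ∈ S, w l)⁻¹ • ∑ l ∈ S, w l • u l‖ ^ 2
      = (∑ l ∈ S, w l * ‖u l‖ ^ 2)
        - (∑ l ∈ S, w l) * ‖(∑ l ∈ S, w l)⁻¹ • ∑ l ∈ S, w l • u l‖ ^ 2 := by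
  set s := ∑ l ∈ S, w l with hsdef
  set A : F := s⁻¹ • ∑ l ∈ S, w l • u l with hA
  have hsum : ∑ l ∈ S, w l • u l = s • A := by
    rw [hA, smul_smul, mul_inv_cancel₀ hs, one_smul]
  have hin : ∑ l ∈ S, w l * (inner ℝ (u l) A : ℝ) = s * ‖A‖ ^ 2 := by
    have : ∑ l ∈ S, w l * (inner ℝ (u l) A : ℝ) = (inner ℝ (∑ l ∈ S, w l • u l) A : ℝ) := by
      rw [sum_inner]
      exact Finset.sum_congr rfl fun l _ => (real_inner_smul_left (u l) A (w l)).symm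
    rw [this, hsum, real_inner_smul_left, real_inner_self_eq_norm_sq]
  have expand : ∀ l, ‖u l - A‖ ^ 2 = ‖u l‖ ^ 2 - 2 * (inner ℝ (u l) A : ℝ) + ‖A‖ ^ 2 := by
    intro l
    rw [norm_sub_sq_real]
  calc ∑ l ∈ S, w l * ‖u l - A‖ ^ 2
      = ∑ l ∈ S, (w l * ‖u l‖ ^ 2 - 2 * (w l * (inner ℝ (u l) A : ℝ)) + w l * ‖A‖ ^ 2) := by
        refine Finset.sum_congr rfl fun l _ => ?_
        rw [expand l]; ring
    _ = (∑ l ∈ S, w l * ‖u l‖ ^ 2) - 2 * (∑ l ∈ S, w l * (inner ℝ (u l) A : ℝ))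
          + (∑ l ∈ S, w l) * ‖A‖ ^ 2 := by
        rw [Finset.sum_add_distrib, Finset.sum_sub_distrib, ← Finset.mul_sum, ← Finset.sum_mul]
    _ = (∑ l ∈ S, w l * ‖u l‖ ^ 2) - s * ‖A‖ ^ 2 := by
        rw [hin]; ring

lemma key_grad {ι : Type*} [DecidableEq ι] (S : Finset ι) (w : ι → ℝ)
    (hs : (∑ l ∈ S, w l) ≠ 0) {i : ι} (hi : i ∈ S) (θ : ι → F) :
    HasGradientAt
      (fun x => 1/2 * ∑ l ∈ S, w l *
        ‖Function.update θ i x l - (∑ l ∈ S, w l)⁻¹ • ∑ l ∈ S, w l • Function.update θ i x l‖ ^ 2)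
      (w i • (θ i - (∑ l ∈ S, w l)⁻¹ • ∑ l ∈ S, w l • θ l)) (θ i) := by
  classical
  set s := ∑ l ∈ S, w l with hsdef
  set b : F := s⁻¹ • ∑ l ∈ S.erase i, w l • θ l with hb
  set C : ℝ := ∑ l ∈ S.erase i, w l * ‖θ l‖ ^ 2 with hC
  have hupd_ne : ∀ (x : F) (l : ι), l ∈ S.erase i → Function.update θ i x l = θ l := by
    intro x l hl
    exact Function.update_of_ne (Finset.ne_of_mem_erase hl) _ _
  -- rewrite the average as an affine function of x
  have havg : ∀ x : F, s⁻¹ • ∑ l ∈ S, w l • Function.update θ i x l = b + (w i * s⁻¹) • x := by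
    intro x
    rw [← Finset.add_sum_erase _ _ hi, Function.update_self]
    rw [Finset.sum_congr rfl fun l hl => by rw [hupd_ne x l hl]]
    rw [smul_add, hb, smul_smul]
    rw [add_comm, mul_comm]
  -- rewrite the whole function
  have hfun : (fun x => 1/2 * ∑ l ∈ S, w l *
        ‖Function.update θ i x l - s⁻¹ • ∑ l ∈ S, w l • Function.update θ i x l‖ ^ 2)
      = fun x => (1/2 * (w i * ‖x‖ ^ 2) + (-(s/2)) * ‖b + (w i * s⁻¹) • x‖ ^ 2) + 1/2 * C := by
    funext x
    rw [mean_identity S w hs (Function.update θ i x)]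
    rw [← Finset.add_sum_erase _ (fun l => w l * ‖Function.update θ i x l‖ ^ 2) hi,
      Function.update_self]
    rw [Finset.sum_congr rfl fun l hl => by rw [hupd_ne x l hl]]
    rw [havg x]
    ring
  rw [hfun]
  have h1 : HasGradientAt (fun x : F => 1/2 * (w i * ‖x‖ ^ 2)) (w i • θ i) (θ i) := by
    have hq := hga_quad (0 : F) 1 (θ i)
    have hq' : HasGradientAt (fun y : F => ‖y‖ ^ 2) ((2:ℝ) • θ i) (θ i) := by
      simpa using hq
    have := hga_const_mul (1/2 * w i) hq'
    convert this using 1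
    · funext y; ring
    · rw [smul_smul]; congr 1; ring
  have h2 : HasGradientAt (fun x : F => (-(s/2)) * ‖b + (w i * s⁻¹) • x‖ ^ 2)
      ((- w i) • (b + (w i * s⁻¹) • θ i)) (θ i) := by
    have hq := hga_quad b (w i * s⁻¹) (θ i)
    have := hga_const_mul (-(s/2)) hq
    convert this using 1
    rw [smul_smul]
    congr 1
    field_simp
  have hsum := hga_add_const (hga_add h1 h2) (1/2 * C)
  convert hsum using 1
  have hbx : b + (w i * s⁻¹) • θ i = s⁻¹ • ∑ l ∈ S, w l • θ l := by
    have := havg (θ i)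
    rw [Function.update_eq_self] at this
    exact this.symm
  rw [hbx, smul_sub, neg_smul]
  abel

end AuxGrad


/-- `E d` is the Euclidean space ℝ^d. -/
abbrev E (d : ℕ) := EuclideanSpace ℝ (Fin d)

/-- The cluster `I_j` of clients assigned to cluster `j` by the assignment map `c`. -/
def clSet {n k : ℕ} (c : Fin n → Fin k) (j : Fin k) : Finset (Fin n) :=
  Finset.univ.filter fun i => c i = j

/-- The weighted cluster average θ̄_j = (Σ_{i∈I_j} γ_i θ_i)/(Σ_{i∈I_j} γ_i). -/
def clAvg {n k d : ℕ} (c : Fin n → Fin k) (γ : Fin n → ℝ) (j : Fin k)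
    (θ : Fin n → E d) : E d :=
  (∑ i ∈ clSet c j, γ i)⁻¹ • ∑ i ∈ clSet c j, γ i • θ i

/-- The global average θ̄ = (Σ_j Σ_{i∈I_j} α_j γ_i θ_i)/(Σ_j Σ_{i∈I_j} α_j γ_i). -/
def glAvg {n k d : ℕ} (c : Fin n → Fin k) (γ : Fin n → ℝ) (α : Fin k → ℝ)
    (θ : Fin n → E d) : E d :=
  (∑ j, ∑ i ∈ clSet c j, α j * γ i)⁻¹ • ∑ j, ∑ i ∈ clSet c j, (α j * γ i) • θ i

/-- The within-cluster regularizer ψ_j(θ) = (1/2) Σ_{i∈I_j} γ_i ‖θ_i − θ̄_j‖². -/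
def psi {n k d : ℕ} (c : Fin n → Fin k) (γ : Fin n → ℝ) (j : Fin k)
    (θ : Fin n → E d) : ℝ :=
  1/2 * ∑ i ∈ clSet c j, γ i * ‖θ i - clAvg c γ j θ‖ ^ 2

/-- The global regularizer φ(θ) = (1/2) Σ_j α_j Σ_{i∈I_j} γ_i ‖θ_i − θ̄‖². -/
def phi {n k d : ℕ} (c : Fin n → Fin k) (γ : Fin n → ℝ) (α : Fin k → ℝ)
    (θ : Fin n → E d) : ℝ :=
  1/2 * ∑ j, α j * ∑ i ∈ clSet c j, γ i * ‖θ i - glAvg c γ α θ‖ ^ 2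

/-- The full objective F(θ) = Σ_i f_i(θ_i) + Σ_j (1−α_j) ψ_j(θ) + φ(θ). -/
def objF {n k d : ℕ} (c : Fin n → Fin k) (γ : Fin n → ℝ) (α : Fin k → ℝ)
    (f : Fin n → E d → ℝ) (θ : Fin n → E d) : ℝ :=
  (∑ i, f i (θ i)) + (∑ j, (1 - α j) * psi c γ j θ) + phi c γ α θ


lemma mem_clSet_iff {n k : ℕ} (c : Fin n → Fin k) (j : Fin k) (i : Fin n) :
    i ∈ clSet c j ↔ c i = j := by
  simp [clSet]

lemma sum_clusters {n k : ℕ} {M : Type*} [AddCommMonoid M] (c : Fin n → Fin k)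
    (g : Fin n → M) : ∑ j, ∑ i ∈ clSet c j, g i = ∑ i, g i := by
  simpa [clSet] using Finset.sum_fiberwise_of_maps_to (fun x _ => Finset.mem_univ (c x)) g

lemma glAvg_eq {n k d : ℕ} (c : Fin n → Fin k) (γ : Fin n → ℝ) (α : Fin k → ℝ)
    (θ : Fin n → E d) :
    glAvg c γ α θ = (∑ l, α (c l) * γ l)⁻¹ • ∑ l, (α (c l) * γ l) • θ l := by
  unfold glAvg
  have h1 : ∑ j, ∑ i ∈ clSet c j, α j * γ i = ∑ l, α (c l) * γ l := by
    rw [← sum_clusters c (fun l => α (c l) * γ l)]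
    exact Finset.sum_congr rfl fun j _ => Finset.sum_congr rfl fun i hi => by
      rw [(mem_clSet_iff c j i).1 hi]
  have h2 : ∑ j, ∑ i ∈ clSet c j, (α j * γ i) • θ i = ∑ l, (α (c l) * γ l) • θ l := by
    rw [← sum_clusters c (fun l => (α (c l) * γ l) • θ l)]
    exact Finset.sum_congr rfl fun j _ => Finset.sum_congr rfl fun i hi => by
      rw [(mem_clSet_iff c j i).1 hi]
  rw [h1, h2]

lemma phi_eq {n k d : ℕ} (c : Fin n → Fin k) (γ : Fin n → ℝ) (α : Fin k → ℝ)
    (θ : Fin n → E d) :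
    phi c γ α θ = 1/2 * ∑ l, (α (c l) * γ l) *
      ‖θ l - (∑ l, α (c l) * γ l)⁻¹ • ∑ l, (α (c l) * γ l) • θ l‖ ^ 2 := by
  unfold phi
  rw [← glAvg_eq]
  congr 1
  rw [← sum_clusters c (fun l => (α (c l) * γ l) * ‖θ l - glAvg c γ α θ‖ ^ 2)]
  refine Finset.sum_congr rfl fun j _ => ?_
  rw [Finset.mul_sum]
  exact Finset.sum_congr rfl fun i hi => by
    rw [(mem_clSet_iff c j i).1 hi, mul_assoc]

lemma psi_update_ne {n k d : ℕ} (c : Fin n → Fin k) (γ : Fin n → ℝ) {j j' : Fin k}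
    (hne : j' ≠ j) {i : Fin n} (hij : c i = j) (θ : Fin n → E d) (x : E d) :
    psi c γ j' (Function.update θ i x) = psi c γ j' θ := by
  have hmem : ∀ l ∈ clSet c j', Function.update θ i x l = θ l := by
    intro l hl
    refine Function.update_of_ne (fun h => ?_) _ _
    exact hne (((mem_clSet_iff c j' l).1 hl) ▸ (h ▸ hij) ▸ rfl)
  unfold psi clAvg
  rw [show (∑ l ∈ clSet c j', γ l • Function.update θ i x l) = ∑ l ∈ clSet c j', γ l • θ l from
    Finset.sum_congr rfl fun l hl => by rw [hmem l hl]]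
  exact congrArg _ (Finset.sum_congr rfl fun l hl => by rw [hmem l hl])

/-- the Async-L2GD stochastic gradient oracle is unbiased: the
probability-weighted combination of its three branches equals
∇f_i(θ_i) + α_j γ_i (θ_i − θ̄) + (1−α_j) γ_i (θ_i − θ̄_j), which is the partial
gradient of F with respect to θ_i. -/
theorem oracle_unbiased {n k d : ℕ}
    (c : Fin n → Fin k) (hc : ∀ j, (clSet c j).Nonempty)
    (γ : Fin n → ℝ) (hγ : ∀ i, 0 < γ i)
    (α : Fin k → ℝ) (hα : ∀ j, α j ∈ Set.Ioc (0 : ℝ) 1)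
    (f : Fin n → E d → ℝ) (hdiff : ∀ i, Differentiable ℝ (f i))
    (τ : Fin k → ℝ) (hτ : ∀ j, τ j ∈ Set.Icc (0 : ℝ) 1)
    (p0 : ℝ) (hp0 : p0 ∈ Set.Ioo (0 : ℝ) 1)
    (p : Fin k → ℝ) (hp : ∀ j, p j ∈ Set.Ioo (0 : ℝ) 1) :
    ∀ (θ : Fin n → E d) (j : Fin k) (i : Fin n), c i = j →
      (p0 • ((γ i * α j / p0) • (θ i - glAvg c γ α θ)
            + (γ i * τ j * (1 - α j) / p0) • (θ i - clAvg c γ j θ))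
        + ((1 - p0) * p j) •
            ((γ i * (1 - τ j) * (1 - α j) / ((1 - p0) * p j)) • (θ i - clAvg c γ j θ))
        + ((1 - p0) * (1 - p j)) •
            ((1 / ((1 - p0) * (1 - p j))) • gradient (f i) (θ i))
        = gradient (f i) (θ i) + (α j * γ i) • (θ i - glAvg c γ α θ)
          + ((1 - α j) * γ i) • (θ i - clAvg c γ j θ)) ∧
      (gradient (f i) (θ i) + (α j * γ i) • (θ i - glAvg c γ α θ)
          + ((1 - α j) * γ i) • (θ i - clAvg c γ j θ)
        = gradient (fun x => objF c γ α f (Function.update θ i x)) (θ i)) := by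
  intro θ j i hij
  have hij' : i ∈ clSet c j := (mem_clSet_iff c j i).2 hij
  constructor
  · have hp0ne : p0 ≠ 0 := ne_of_gt hp0.1
    have h1p0 : (1:ℝ) - p0 ≠ 0 := ne_of_gt (by linarith [hp0.2])
    have hpj : p j ≠ 0 := ne_of_gt (hp j).1
    have h1pj : (1:ℝ) - p j ≠ 0 := ne_of_gt (by linarith [(hp j).2])
    match_scalars <;> field_simp <;> ring
  · set w : Fin n → ℝ := fun l => α (c l) * γ l with hw
    have hsψ : (∑ l ∈ clSet c j, γ l) ≠ 0 :=
      ne_of_gt (Finset.sum_pos (fun l _ => hγ l) (hc j))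
    have hsφ : (∑ l, w l) ≠ 0 :=
      ne_of_gt (Finset.sum_pos (fun l _ => mul_pos (hα (c l)).1 (hγ l)) ⟨i, Finset.mem_univ i⟩)
    have hψ := key_grad (clSet c j) γ hsψ hij' θ
    have hφ := key_grad Finset.univ w hsφ (Finset.mem_univ i) θ
    have hf : HasGradientAt (f i) (gradient (f i) (θ i)) (θ i) :=
      ((hdiff i) (θ i)).hasGradientAt
    have hfun : (fun x => objF c γ α f (Function.update θ i x))
        = fun x => ((f i x
            + (1 - α j) * (1/2 * ∑ l ∈ clSet c j, γ l *
                ‖Function.update θ i x l - (∑ l ∈ clSet c j, γ l)⁻¹ •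
                  ∑ l ∈ clSet c j, γ l • Function.update θ i x l‖ ^ 2))
            + 1/2 * ∑ l, w l *
                ‖Function.update θ i x l - (∑ l, w l)⁻¹ •
                  ∑ l, w l • Function.update θ i x l‖ ^ 2)
          + ((∑ l ∈ Finset.univ.erase i, f l (θ l))
            + ∑ j' ∈ Finset.univ.erase j, (1 - α j') * psi c γ j' θ) := by
      funext x
      unfold objF
      have e1 : ∑ l, f l (Function.update θ i x l)
          = f i x + ∑ l ∈ Finset.univ.erase i, f l (θ l) := by
        rw [← Finset.add_sum_erase _ _ (Finset.mem_univ i), Function.update_self]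
        congr 1
        exact Finset.sum_congr rfl fun l hl =>
          by rw [Function.update_of_ne (Finset.ne_of_mem_erase hl)]
      have e2 : ∑ j', (1 - α j') * psi c γ j' (Function.update θ i x)
          = (1 - α j) * psi c γ j (Function.update θ i x)
            + ∑ j' ∈ Finset.univ.erase j, (1 - α j') * psi c γ j' θ := by
        rw [← Finset.add_sum_erase _ _ (Finset.mem_univ j)]
        congr 1
        exact Finset.sum_congr rfl fun j' hl =>
          by rw [psi_update_ne c γ (Finset.ne_of_mem_erase hl) hij]
      rw [e1, e2, phi_eq]
      unfold psi clAvg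
      ring
    have htot := hga_add_const (hga_add (hga_add hf (hga_const_mul (1 - α j) hψ)) hφ)
      ((∑ l ∈ Finset.univ.erase i, f l (θ l))
        + ∑ j' ∈ Finset.univ.erase j, (1 - α j') * psi c γ j' θ)
    symm
    rw [hfun, htot.gradient, glAvg_eq]
    simp only [clAvg, hw, hij, smul_smul]
    abel
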